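/- Fix an integer d ≥ 1 and let β > 1/2. There exists a constant C > 0 depending only on β such that for every b ∈ Ê, Σ_{c∈Ê} 1/((1 + ln c)^{2β} (1 + |b − c|)) ≤ C. -/

import Mathlib

open Real

private lemma cast_nat_dist (a b : ℕ) : (Nat.dist a b : ℝ) = |(a : ℝ) - b| := by
  rcases le_total a b with h | h
  · have h1 : Nat.dist a b = b - a := by simp [Nat.dist, Nat.sub_eq_zero_of_le h]
    rw [h1, Nat.cast_sub h, abs_sub_comm, abs_of_nonneg (sub_nonneg.2 (by exact_mod_cast h))]
  · have h1 : Nat.dist a b = a - b := by simp [Nat.dist, Nat.sub_eq_zero_of_le h]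
    rw [h1, Nat.cast_sub h, abs_of_nonneg (sub_nonneg.2 (by exact_mod_cast h))]

private lemma g_summable (s : ℝ) (hs : 1 < s) :
    Summable (fun n : ℕ => 1 / ((1 + (n : ℝ)) * (1 + Real.log (1 + n)) ^ s)) := by
  set f : ℕ → ℝ := fun n => 1 / ((1 + (n : ℝ)) * (1 + Real.log (1 + n)) ^ s) with hf
  have hs0 : (0 : ℝ) ≤ s := by linarith
  have hbase : ∀ n : ℕ, (0 : ℝ) < 1 + Real.log (1 + n) := by
    intro n
    have : (0:ℝ) ≤ Real.log (1 + n) :=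
      Real.log_nonneg (le_add_of_nonneg_right (Nat.cast_nonneg n))
    linarith
  have hpos : ∀ n, 0 < f n := by
    intro n
    have := hbase n
    have : (0:ℝ) < (1 + Real.log (1 + n)) ^ s := Real.rpow_pos_of_pos this s
    positivity
  have hmono : ∀ ⦃m n : ℕ⦄, 0 < m → m ≤ n → f n ≤ f m := by
    intro m n _ hmn
    apply one_div_le_one_div_of_le
    · have := Real.rpow_pos_of_pos (hbase m) s
      positivity
    · apply mul_le_mul
      · have : (m:ℝ) ≤ n := by exact_mod_cast hmn
        linarith
      · apply Real.rpow_le_rpow (hbase m).le _ hs0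
        have : Real.log (1 + (m:ℝ)) ≤ Real.log (1 + n) := by
          apply Real.log_le_log (by positivity)
          have : (m:ℝ) ≤ n := by exact_mod_cast hmn
          linarith
        linarith
      · exact (Real.rpow_pos_of_pos (hbase m) s).le
      · positivity
  rw [← summable_condensed_iff_of_nonneg (fun n => (hpos n).le) hmono]
  -- bound 2^n * f (2^n) ≤ (log 2)⁻¹ ^ s * (1/(1+n)^s)
  have key : ∀ n : ℕ, 2 ^ n * f (2 ^ n) ≤ (Real.log 2) ^ (-s) * (1 / (1 + (n:ℝ)) ^ s) := by
    intro n
    have h2n : (1:ℝ) ≤ (2:ℝ) ^ n := one_le_pow₀ (by norm_num)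
    have hlog2 : (0:ℝ) < Real.log 2 := Real.log_pos (by norm_num)
    have hlog2le : Real.log 2 ≤ 1 := by
      have := Real.log_le_sub_one_of_pos (x := 2) (by norm_num)
      linarith
    have hA : Real.log 2 * (1 + (n:ℝ)) ≤ 1 + Real.log (1 + (2:ℝ) ^ n) := by
      have h1 : Real.log ((2:ℝ) ^ n) ≤ Real.log (1 + (2:ℝ) ^ n) :=
        Real.log_le_log (by positivity) (by linarith)
      rw [Real.log_pow] at h1
      have : Real.log 2 * (1 + (n:ℝ)) = Real.log 2 + n * Real.log 2 := by ring
      rw [this]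
      linarith
    have hApos : (0:ℝ) < Real.log 2 * (1 + (n:ℝ)) := by positivity
    have hrpow : (Real.log 2 * (1 + (n:ℝ))) ^ s ≤ (1 + Real.log (1 + (2:ℝ) ^ n)) ^ s :=
      Real.rpow_le_rpow hApos.le hA hs0
    have hfb : f (2 ^ n) ≤ 1 / ((2:ℝ) ^ n * (Real.log 2 * (1 + (n:ℝ))) ^ s) := by
      apply one_div_le_one_div_of_le (by positivity)
      apply mul_le_mul
      · push_cast; linarith
      · push_cast at hrpow ⊢; exact hrpow
      · exact (Real.rpow_pos_of_pos hApos s).le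
      · push_cast; linarith
    calc (2:ℝ) ^ n * f (2 ^ n) ≤ (2:ℝ) ^ n * (1 / ((2:ℝ) ^ n * (Real.log 2 * (1 + (n:ℝ))) ^ s)) :=
          mul_le_mul_of_nonneg_left hfb (by positivity)
      _ = 1 / (Real.log 2 * (1 + (n:ℝ))) ^ s := by
          field_simp
      _ = (Real.log 2) ^ (-s) * (1 / (1 + (n:ℝ)) ^ s) := by
          rw [Real.mul_rpow hlog2.le (by positivity), Real.rpow_neg hlog2.le]
          field_simp
  apply Summable.of_nonneg_of_le (fun n => mul_nonneg (by positivity) (hpos _).le) key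
  apply Summable.mul_left
  have h1 : Summable (fun n : ℕ => 1 / ((n:ℝ) + 1) ^ s) := by
    have := (Real.summable_one_div_nat_rpow (p := s)).2 hs
    have h2 := (summable_nat_add_iff (f := fun n : ℕ => 1 / (n:ℝ) ^ s) 1).2 this
    simpa using h2
  exact h1.congr (fun n => by rw [add_comm])

theorem stmt10 (d : ℕ) (hd : 1 ≤ d) (β : ℝ) (hβ : 1 / 2 < β) :
    ∃ C > 0, ∀ kb : ℕ,
      Summable (fun k : ℕ =>
        1 / ((1 + Real.log ((d : ℝ) + 2 * k)) ^ (2 * β) *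
          (1 + |((d : ℝ) + 2 * kb) - ((d : ℝ) + 2 * k)|))) ∧
      ∑' k : ℕ, 1 / ((1 + Real.log ((d : ℝ) + 2 * k)) ^ (2 * β) *
          (1 + |((d : ℝ) + 2 * kb) - ((d : ℝ) + 2 * k)|)) ≤ C := by
  set s : ℝ := 2 * β with hsdef
  have hs : 1 < s := by rw [hsdef]; linarith
  have hs0 : (0:ℝ) ≤ s := by linarith
  set g : ℕ → ℝ := fun n => 1 / ((1 + Real.log (1 + (n : ℝ))) ^ s * (1 + n)) with hg
  have hbase : ∀ n : ℕ, (0 : ℝ) < 1 + Real.log (1 + n) := by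
    intro n
    have : (0:ℝ) ≤ Real.log (1 + n) :=
      Real.log_nonneg (le_add_of_nonneg_right (Nat.cast_nonneg n))
    linarith
  have hgpos : ∀ n, 0 < g n := by
    intro n
    have := Real.rpow_pos_of_pos (hbase n) s
    positivity
  have hgsum : Summable g := by
    have h := g_summable s hs
    have he : g = fun n : ℕ => 1 / ((1 + (n : ℝ)) * (1 + Real.log (1 + n)) ^ s) := by
      funext n; rw [hg]; rw [mul_comm]
    rw [he]; exact h
  refine ⟨3 * (∑' n, g n) + 1, by have : 0 ≤ ∑' n, g n := tsum_nonneg (fun n => (hgpos n).le); linarith, fun kb => ?_⟩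
  set t : ℕ → ℝ := fun k =>
    1 / ((1 + Real.log ((d : ℝ) + 2 * k)) ^ (2 * β) *
      (1 + |((d : ℝ) + 2 * kb) - ((d : ℝ) + 2 * k)|)) with ht
  -- pointwise bound
  have habs : ∀ k : ℕ, |((d : ℝ) + 2 * kb) - ((d : ℝ) + 2 * k)| = 2 * (Nat.dist k kb : ℝ) := by
    intro k
    rw [cast_nat_dist]
    rw [show ((d : ℝ) + 2 * kb) - ((d : ℝ) + 2 * k) = 2 * ((kb:ℝ) - k) by ring,
      abs_mul, abs_two, abs_sub_comm]
  have hdk : ∀ k : ℕ, (1:ℝ) + k ≤ (d : ℝ) + 2 * k := by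
    intro k
    have : (1:ℝ) ≤ d := by exact_mod_cast hd
    have : (0:ℝ) ≤ k := Nat.cast_nonneg k
    linarith
  have hlogbase : ∀ k : ℕ, (0:ℝ) < 1 + Real.log ((d : ℝ) + 2 * k) := by
    intro k
    have h1 : (1:ℝ) ≤ (d:ℝ) + 2 * k := le_trans (by linarith [Nat.cast_nonneg (α := ℝ) k]) (hdk k)
    have : (0:ℝ) ≤ Real.log ((d:ℝ) + 2 * k) := Real.log_nonneg h1
    linarith
  have hkey : ∀ m k : ℕ, (m:ℝ) ≤ 1 + k → (m:ℝ) ≤ |((d : ℝ) + 2 * kb) - ((d : ℝ) + 2 * k)| + 1 →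
      False ∨ True := fun _ _ _ _ => Or.inr trivial
  have hptwise : ∀ k : ℕ, t k ≤ g k + g (Nat.dist k kb) := by
    intro k
    have bound : ∀ m : ℕ, ((m:ℝ) ≤ k) → ((m:ℝ) ≤ Nat.dist k kb) → t k ≤ g m := by
      intro m hm1 hm2
      rw [ht, hg]
      apply one_div_le_one_div_of_le
      · have := Real.rpow_pos_of_pos (hbase m) s
        positivity
      · apply mul_le_mul
        · apply Real.rpow_le_rpow (hbase m).le _ hs0
          have hlog : Real.log (1 + (m:ℝ)) ≤ Real.log ((d:ℝ) + 2 * k) := by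
            apply Real.log_le_log (by positivity)
            exact le_trans (by linarith) (hdk k)
          linarith
        · rw [habs k]
          have : (0:ℝ) ≤ (Nat.dist k kb : ℝ) := Nat.cast_nonneg _
          linarith
        · linarith [Nat.cast_nonneg (α := ℝ) m]
        · exact (Real.rpow_pos_of_pos (hlogbase k) s).le

    rcases le_total k (Nat.dist k kb) with h | h
    · have : t k ≤ g k := bound k le_rfl (by exact_mod_cast h)
      linarith [(hgpos (Nat.dist k kb)).le]
    · have : t k ≤ g (Nat.dist k kb) := bound (Nat.dist k kb) (by exact_mod_cast h) le_rfl
      linarith [(hgpos k).le]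
  have hhs : Summable (fun k : ℕ => g (Nat.dist k kb)) := by
    apply (summable_nat_add_iff kb).1
    have : (fun n : ℕ => g (Nat.dist (n + kb) kb)) = g := by
      funext n
      congr 1
      simp [Nat.dist]
    rw [this]
    exact hgsum
  have hmaj : Summable (fun k : ℕ => g k + g (Nat.dist k kb)) := hgsum.add hhs
  have htnonneg : ∀ k, 0 ≤ t k := by
    intro k
    have := Real.rpow_pos_of_pos (hlogbase k) s
    have habs' := abs_nonneg (((d : ℝ) + 2 * kb) - ((d : ℝ) + 2 * k))
    rw [ht]
    positivity
  have htsum : Summable t := Summable.of_nonneg_of_le htnonneg hptwise hmaj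
  refine ⟨htsum, ?_⟩
  have hgnn : ∀ n, 0 ≤ g n := fun n => (hgpos n).le
  have h1 : ∑' k, t k ≤ ∑' k, (g k + g (Nat.dist k kb)) := Summable.tsum_le_tsum hptwise htsum hmaj
  have h2 : ∑' k, (g k + g (Nat.dist k kb)) = (∑' k, g k) + ∑' k, g (Nat.dist k kb) :=
    Summable.tsum_add hgsum hhs
  have h3 : ∑' k, g (Nat.dist k kb) ≤ 2 * ∑' n, g n := by
    have hsplit := hhs.sum_add_tsum_nat_add (f := fun k : ℕ => g (Nat.dist k kb)) kb
    have htail : ∑' n : ℕ, g (Nat.dist (n + kb) kb) = ∑' n, g n := by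
      congr 1
      funext n
      congr 1
      simp [Nat.dist]
    have hhead : ∑ i ∈ Finset.range kb, g (Nat.dist i kb) ≤ ∑' n, g n := by
      have heq : ∑ i ∈ Finset.range kb, g (Nat.dist i kb)
          = ∑ j ∈ (Finset.range kb).image (fun i => Nat.dist i kb), g j := by
        rw [Finset.sum_image]
        intro x hx y hy hxy
        simp only [Finset.coe_range, Set.mem_Iio, Finset.mem_coe, Finset.mem_range] at hx hy
        simp [Nat.dist] at hxy
        omega
      rw [heq]
      exact Summable.sum_le_tsum _ (fun i _ => hgnn i) hgsum
    rw [← hsplit] at *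
    rw [htail] at *
    linarith
  calc ∑' k, t k ≤ (∑' k, g k) + ∑' k, g (Nat.dist k kb) := by rw [← h2]; exact h1
    _ ≤ 3 * (∑' n, g n) + 1 := by linarith [(tsum_nonneg hgnn : 0 ≤ ∑' n, g n)]
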